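/- In the polynomial ring F₃[x, y] over the field with three elements, the element (x + y)¹³ · x¹⁸ · y¹⁶ does not belong to the ideal generated by x²⁷ and y²⁷. -/
import Mathlib


open MvPolynomial

lemma key_coeff : coeff (Finsupp.single 0 4 + Finsupp.single 1 9)
    ((X 0 + X 1) ^ 13 : MvPolynomial (Fin 2) (ZMod 3)) = 1 := by
  rw [add_pow, coeff_sum]
  simp only [X_pow_eq_monomial, monomial_mul, mul_one, ← C_eq_coe_nat, mul_comm,
    coeff_C_mul, coeff_monomial]
  rw [Finset.sum_eq_single 4]
  · norm_num
    decide
  · intro b _ hb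
    rw [if_neg, mul_zero]
    intro h
    apply hb
    have := DFunLike.congr_fun h (0 : Fin 2)
    simpa using this
  · intro h
    exact absurd (by norm_num) h

/-- In `F₃[x, y]`, the element `(x + y)¹³ · x¹⁸ · y¹⁶` does not belong to the ideal
generated by `x²⁷` and `y²⁷`. -/
theorem stmt_9 :
    ((X 0 + X 1) ^ 13 * X 0 ^ 18 * X 1 ^ 16 : MvPolynomial (Fin 2) (ZMod 3)) ∉
      Ideal.span ({X 0 ^ 27, X 1 ^ 27} : Set (MvPolynomial (Fin 2) (ZMod 3))) := by
  intro h
  rw [Ideal.mem_span_pair] at h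
  obtain ⟨a, b, hab⟩ := h
  set m : Fin 2 →₀ ℕ := Finsupp.single 0 22 + Finsupp.single 1 25 with hm
  have h1 : coeff m (a * X 0 ^ 27 + b * X 1 ^ 27) = 0 := by
    rw [coeff_add, X_pow_eq_monomial, X_pow_eq_monomial, coeff_mul_monomial',
      coeff_mul_monomial', if_neg, if_neg, add_zero]
    · intro hle
      have := hle 1
      simp [hm] at this
    · intro hle
      have := hle 0
      simp [hm] at this
  have h2 : coeff m ((X 0 + X 1) ^ 13 * X 0 ^ 18 * X 1 ^ 16
      : MvPolynomial (Fin 2) (ZMod 3)) = 1 := by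
    rw [show (X 1 : MvPolynomial (Fin 2) (ZMod 3)) ^ 16 = monomial (Finsupp.single 1 16) 1
        from X_pow_eq_monomial, coeff_mul_monomial', if_pos,
      show (X 0 : MvPolynomial (Fin 2) (ZMod 3)) ^ 18 = monomial (Finsupp.single 0 18) 1
        from X_pow_eq_monomial, coeff_mul_monomial', if_pos]
    · have e1 : m - Finsupp.single 1 16 - Finsupp.single 0 18 =
          Finsupp.single 0 4 + Finsupp.single 1 9 := by
        ext i
        fin_cases i <;> simp [hm]
      rw [e1, key_coeff, mul_one, mul_one]
    · intro i
      fin_cases i <;> simp [hm]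
    · intro i
      fin_cases i <;> simp [hm]
  rw [← hab, h1] at h2
  exact one_ne_zero h2.symm
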